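/- Let $a \le b$ be real numbers and let $F, G : [a,b] \to \mathbb{R}$ be differentiable functions with $|F(t) - G(t)| \le \eta$ for all $t \in [a,b]$ and $F'(t) \le G'(t) + \eta$ for almost every $t$. Then for every $\eta' > 0$ with $(b-a)\eta' > 4\eta + (b-a)\eta$, the set of times $s \in [a,b]$ at which $F'(s) \ge G'(s) - \eta'$ has positive Lebesgue measure; more precisely, its measure is at least $\frac{(b-a)\eta' - 4\eta - (b-a)\eta}{2\eta'}$. -/

import Mathlib

open MeasureTheory

/-- Quantitative measure-selection lemma: if `|F - G| ≤ η` on `[a,b]` and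
`F' ≤ G' + η` almost everywhere, then for any `η'` with `(b-a)η' > 4η + (b-a)η`,
the set of `s ∈ [a,b]` with `F'(s) ≥ G'(s) - η'` has Lebesgue measure at least
`((b-a)η' - 4η - (b-a)η)/(2η')`. -/
theorem stmt3 (a b η η' : ℝ) (hab : a ≤ b) (hη : 0 ≤ η) (hη' : 0 < η')
    (F G : ℝ → ℝ) (hF : Differentiable ℝ F) (hG : Differentiable ℝ G)
    (hclose : ∀ t ∈ Set.Icc a b, |F t - G t| ≤ η)
    (hderiv : ∀ᵐ t ∂(volume.restrict (Set.Icc a b)), deriv F t ≤ deriv G t + η)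
    (hbig : (b - a) * η' > 4 * η + (b - a) * η) :
    ENNReal.ofReal (((b - a) * η' - 4 * η - (b - a) * η) / (2 * η')) ≤
      volume {s ∈ Set.Icc a b | deriv F s ≥ deriv G s - η'} := by
  set D : ℝ → ℝ := fun s => deriv G s - deriv F s with hDdef
  set φ : ℝ → ℝ := fun s => min (D s) η' with hφdef
  have hDmeas : Measurable D := (measurable_deriv G).sub (measurable_deriv F)
  have hφmeas : Measurable φ := hDmeas.min measurable_const
  -- a.e. lower bound on D
  have hDae : ∀ᵐ t ∂(volume.restrict (Set.Icc a b)), -η ≤ D t := by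
    filter_upwards [hderiv] with t ht
    simp only [hDdef]; linarith
  -- a.e. bound on φ
  have hae : ∀ᵐ t ∂(volume.restrict (Set.Icc a b)), ‖φ t‖ ≤ max η η' := by
    filter_upwards [hDae] with t ht
    have h1 : φ t ≤ η' := min_le_right _ _
    have h2 : -η ≤ φ t := le_min ht (by linarith)
    rw [Real.norm_eq_abs, abs_le]
    constructor
    · have : -(max η η') ≤ -η := neg_le_neg (le_max_left _ _)
      linarith
    · exact h1.trans (le_max_right _ _)
  have hφint : IntegrableOn φ (Set.Icc a b) := by
    have hc : IntegrableOn (fun _ : ℝ => max η η') (Set.Icc a b) :=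
      integrableOn_const measure_Icc_lt_top.ne
    refine Integrable.mono' hc hφmeas.aestronglyMeasurable ?_
    exact hae
  -- FTC inequality for g = G - F
  set g : ℝ → ℝ := fun t => G t - F t with hgdef
  have hcont : ContinuousOn g (Set.Icc a b) :=
    (hG.continuous.sub hF.continuous).continuousOn
  have hgderiv : ∀ x ∈ Set.Ioo a b, HasDerivWithinAt g (D x) (Set.Ioi x) x := fun x _ =>
    (((hG x).hasDerivAt).sub ((hF x).hasDerivAt)).hasDerivWithinAt
  have key : (∫ y in a..b, φ y) ≤ g b - g a :=
    intervalIntegral.integral_le_sub_of_hasDeriv_right_of_le hab hcont hgderiv hφint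
      (fun x _ => min_le_left _ _)
  have hgb : g b - g a ≤ 2 * η := by
    have h1 := hclose a (Set.left_mem_Icc.2 hab)
    have h2 := hclose b (Set.right_mem_Icc.2 hab)
    rw [abs_le] at h1 h2
    simp only [hgdef]
    linarith [h1.1, h1.2, h2.1, h2.2]
  -- sets
  set A : Set ℝ := Set.Icc a b ∩ {s | D s ≤ η'} with hAdef
  set B : Set ℝ := Set.Icc a b ∩ {s | η' < D s} with hBdef
  have hAmeas : MeasurableSet A := measurableSet_Icc.inter (hDmeas measurableSet_Iic)
  have hBmeas : MeasurableSet B := measurableSet_Icc.inter (hDmeas measurableSet_Ioi)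
  have hdisj : Disjoint A B := by
    rw [Set.disjoint_left]
    rintro x ⟨-, hx1⟩ ⟨-, hx2⟩
    simp only [Set.mem_setOf_eq] at hx1 hx2
    exact absurd hx1 (not_le.2 hx2)
  have hunion : A ∪ B = Set.Icc a b := by
    ext x
    simp only [hAdef, hBdef, Set.mem_union, Set.mem_inter_iff, Set.mem_setOf_eq]
    constructor
    · rintro (⟨h, -⟩ | ⟨h, -⟩) <;> exact h
    · intro h
      rcases le_or_gt (D x) η' with h' | h'
      · exact Or.inl ⟨h, h'⟩
      · exact Or.inr ⟨h, h'⟩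
  -- finiteness
  have hAfin : volume A ≠ ⊤ :=
    ((measure_mono Set.inter_subset_left).trans_lt measure_Icc_lt_top).ne
  have hBfin : volume B ≠ ⊤ :=
    ((measure_mono Set.inter_subset_left).trans_lt measure_Icc_lt_top).ne
  set mA : ℝ := (volume A).toReal with hmAdef
  set mB : ℝ := (volume B).toReal with hmBdef
  have hmAnn : 0 ≤ mA := ENNReal.toReal_nonneg
  have hmBnn : 0 ≤ mB := ENNReal.toReal_nonneg
  have hsum : mA + mB = b - a := by
    have h1 : volume (A ∪ B) = volume A + volume B := measure_union hdisj hBmeas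
    rw [hunion, Real.volume_Icc] at h1
    have := congrArg ENNReal.toReal h1
    rw [ENNReal.toReal_ofReal (by linarith), ENNReal.toReal_add hAfin hBfin] at this
    linarith [this]
  -- split the integral
  have hintA : IntegrableOn φ A := hφint.mono_set Set.inter_subset_left
  have hintB : IntegrableOn φ B := hφint.mono_set Set.inter_subset_left
  have hsplit : (∫ y in a..b, φ y) = (∫ y in A, φ y) + ∫ y in B, φ y := by
    rw [intervalIntegral.integral_of_le hab, ← integral_Icc_eq_integral_Ioc, ← hunion,
      setIntegral_union hdisj hBmeas hintA hintB]
  -- integral over B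
  have hIB : (∫ y in B, φ y) = η' * mB := by
    have : ∀ y ∈ B, φ y = η' := by
      rintro y ⟨-, hy⟩
      exact min_eq_right (le_of_lt hy)
    rw [setIntegral_congr_fun hBmeas this, setIntegral_const]
    simp [hmBdef, mul_comm, Measure.real_def]
  -- integral over A
  have hIA : -η * mA ≤ ∫ y in A, φ y := by
    have haeA : ∀ᵐ t ∂(volume.restrict A), -η ≤ φ t := by
      refine ae_restrict_of_ae_restrict_of_subset Set.inter_subset_left ?_
      filter_upwards [hDae] with t ht
      exact le_min ht (by linarith)
    have := setIntegral_mono_ae_restrict (integrableOn_const hAfin)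
      hintA haeA
    rw [setIntegral_const] at this
    calc -η * mA = (volume A).toReal • (-η) := by
          simp [hmAdef, smul_eq_mul, mul_comm]
      _ ≤ _ := this
  -- main inequality
  have hmain : η' * mB - η * mA ≤ 2 * η := by
    have := hsplit ▸ key
    linarith [hIA, hIB, hgb, this]
  -- identify the goal set with A
  have hset : {s ∈ Set.Icc a b | deriv F s ≥ deriv G s - η'} = A := by
    ext x
    simp only [hAdef, Set.mem_inter_iff, Set.mem_setOf_eq, ge_iff_le, hDdef]
    constructor
    · rintro ⟨h1, h2⟩; exact ⟨h1, by linarith⟩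
    · rintro ⟨h1, h2⟩; exact ⟨h1, by linarith⟩
  rw [hset]
  refine ENNReal.ofReal_le_of_le_toReal ?_
  rw [← hmAdef, div_le_iff₀ (by positivity)]
  have hmA_le : mA ≤ b - a := by linarith
  nlinarith [mul_le_mul_of_nonneg_left hmA_le hη, hmain, hsum, hbig, hη'.le]
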